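/- For two anticommuting Hermitian involutions M₁ and M₂ (M₁M₂ = −M₂M₁, Mᵢ² = 1) and any quantum state ρ, one has Tr(ρM₁)² + Tr(ρM₂)² ≤ 1. -/

import Mathlib

open Matrix
open scoped ComplexOrder

lemma psd_trace_re_nonneg {d : ℕ} {C : Matrix (Fin d) (Fin d) ℂ}
    (h : C.PosSemidef) : 0 ≤ C.trace.re := by
  have hdiag : ∀ i, 0 ≤ (C i i).re := by
    intro i
    have := h.dotProduct_mulVec_nonneg (Pi.single i 1)
    have hstar : star (Pi.single i 1 : Fin d → ℂ) = Pi.single i 1 := by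
      ext x; simp [Pi.single_apply, apply_ite]
    have heq : star (Pi.single i 1) ⬝ᵥ (C *ᵥ Pi.single i 1) = C i i := by
      rw [hstar, single_dotProduct, one_mul, Matrix.mulVec_single]; simp
    rw [heq] at this
    exact (Complex.le_def.mp this).1
  simpa [Matrix.trace, Matrix.diag, Complex.re_sum] using Finset.sum_nonneg fun i _ => hdiag i

open scoped MatrixOrder in
lemma psd_trace_mul_re_nonneg {d : ℕ} {A B : Matrix (Fin d) (Fin d) ℂ}
    (hA : A.PosSemidef) (hB : B.PosSemidef) : 0 ≤ (A * B).trace.re := by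
  set S := CFC.sqrt A with hS
  have hSS : S * S = A := CFC.sqrt_mul_sqrt_self A hA.nonneg
  have hherm : Sᴴ = S := (CFC.sqrt_nonneg A).posSemidef.isHermitian
  have h1 : (A * B).trace = (Sᴴ * B * S).trace := by
    rw [hherm, ← hSS, Matrix.mul_assoc, Matrix.trace_mul_comm S (S * B)]
  rw [h1]
  exact psd_trace_re_nonneg (hB.conjTranspose_mul_mul_same S)

lemma involution_exp_le {d : ℕ} {M ρ : Matrix (Fin d) (Fin d) ℂ}
    (hM : M.IsHermitian) (hinv : M * M = 1)
    (hρ : ρ.PosSemidef) (htr : ρ.trace = 1) :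
    ((ρ * M).trace.re) ≤ 1 := by
  set A : Matrix (Fin d) (Fin d) ℂ := ((1:ℂ)/2) • (1 - M) with hA
  have hAherm : Aᴴ = A := by
    simp [hA, Matrix.conjTranspose_smul, Matrix.conjTranspose_sub, hM.eq]
  have hAA : Aᴴ * A = A := by
    rw [hAherm]
    have : (1 - M) * (1 - M) = (2:ℂ) • (1 - M) := by
      rw [Matrix.sub_mul, Matrix.mul_sub, Matrix.mul_sub, hinv]
      simp only [Matrix.one_mul, Matrix.mul_one]
      rw [two_smul]
      abel
    rw [Matrix.smul_mul, Matrix.mul_smul, this, smul_smul, smul_smul]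
    norm_num
    rfl
  have hApsd : A.PosSemidef := hAA ▸ Matrix.posSemidef_conjTranspose_mul_self A
  have := psd_trace_mul_re_nonneg hρ hApsd
  have hcalc : (ρ * A).trace = ((1:ℂ)/2) • ((1:ℂ) - (ρ * M).trace) := by
    simp [hA, Matrix.mul_smul, Matrix.mul_sub, Matrix.trace_smul, Matrix.trace_sub, htr]
  rw [hcalc] at this
  simp only [smul_eq_mul, Complex.mul_re, Complex.sub_re, Complex.one_re,
    Complex.sub_im, Complex.one_im] at this
  norm_num at this
  linarith

theorem two_anticommuting_expectation_bound (d : ℕ)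
    (M₁ M₂ : Matrix (Fin d) (Fin d) ℂ)
    (h₁ : M₁.IsHermitian) (h₂ : M₂.IsHermitian)
    (hinv₁ : M₁ * M₁ = 1) (hinv₂ : M₂ * M₂ = 1)
    (hanti : M₁ * M₂ = - (M₂ * M₁))
    (ρ : Matrix (Fin d) (Fin d) ℂ)
    (hρ : ρ.PosSemidef) (htr : ρ.trace = 1) :
    ((ρ * M₁).trace.re) ^ 2 + ((ρ * M₂).trace.re) ^ 2 ≤ 1 := by
  set a := (ρ * M₁).trace.re with ha
  set b := (ρ * M₂).trace.re with hb
  rcases eq_or_lt_of_le (by positivity : (0:ℝ) ≤ a ^ 2 + b ^ 2) with h0 | hpos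
  · rw [← h0]; norm_num
  · set r := Real.sqrt (a ^ 2 + b ^ 2) with hr
    have hrpos : 0 < r := Real.sqrt_pos.mpr hpos
    have hr2 : r ^ 2 = a ^ 2 + b ^ 2 := Real.sq_sqrt hpos.le
    set c := a / r with hc
    set s := b / r with hs
    have hcs : c ^ 2 + s ^ 2 = 1 := by
      rw [hc, hs, div_pow, div_pow, ← add_div, ← hr2]
      exact div_self (pow_ne_zero 2 hrpos.ne')
    set M : Matrix (Fin d) (Fin d) ℂ := (c : ℂ) • M₁ + (s : ℂ) • M₂ with hM
    have hMherm : M.IsHermitian := by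
      unfold Matrix.IsHermitian
      simp [hM, Matrix.conjTranspose_add, Matrix.conjTranspose_smul, h₁.eq, h₂.eq,
        Complex.conj_ofReal]
    have hMinv : M * M = 1 := by
      have hz : M₁ * M₂ + M₂ * M₁ = 0 := by rw [hanti]; abel
      have key : M * M = ((c:ℂ)^2 + (s:ℂ)^2) • (1 : Matrix (Fin d) (Fin d) ℂ)
          + ((c:ℂ) * (s:ℂ)) • (M₁ * M₂ + M₂ * M₁) := by
        simp only [hM, Matrix.add_mul, Matrix.mul_add, Matrix.smul_mul, Matrix.mul_smul,
          smul_smul, hinv₁, hinv₂]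
        module
      have h1 : ((c:ℂ)^2 + (s:ℂ)^2) = 1 := by
        rw [show ((c:ℂ)^2 + (s:ℂ)^2) = ((c^2 + s^2 : ℝ) : ℂ) by push_cast; ring, hcs,
          Complex.ofReal_one]
      rw [key, hz, smul_zero, add_zero, h1, one_smul]
    have hle : ((ρ * M).trace.re) ≤ 1 := involution_exp_le hMherm hMinv hρ htr
    have hval : (ρ * M).trace.re = c * a + s * b := by
      simp [hM, Matrix.mul_add, Matrix.mul_smul, Matrix.trace_add, Matrix.trace_smul,
        Complex.mul_re, Complex.ofReal_re, Complex.ofReal_im, ha, hb]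
    rw [hval] at hle
    have : c * a + s * b = r := by
      rw [hc, hs, div_mul_eq_mul_div, div_mul_eq_mul_div, ← add_div, div_eq_iff hrpos.ne']
      linear_combination -hr2
    rw [this] at hle
    calc a ^ 2 + b ^ 2 = r ^ 2 := hr2.symm
      _ ≤ 1 := by nlinarith
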